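/- Let G be a CSA group, let E be a nontrivial abelian subgroup of G, and let A = C_G(E) be the centralizer of E. If g ∈ G is such that the subgroup generated by E and g⁻¹Eg is abelian (i.e. g⁻¹Eg commutes elementwise with E), then g ∈ A. -/

import Mathlib

/-- Let G be a CSA group (commutative transitive, with malnormal maximal
abelian subgroups), E a nontrivial abelian subgroup, A = C_G(E). If g⁻¹Eg commutes
elementwise with E (i.e. ⟨E, g⁻¹Eg⟩ is abelian), then g ∈ A. -/
theorem csa_commuting_conjugate_in_centralizer {G : Type*} [Group G]
    (hCT : ∀ a b c : G, a ≠ 1 → b ≠ 1 → c ≠ 1 → Commute a b → Commute b c → Commute a c)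
    (hMal : ∀ M : Subgroup G, IsMulCommutative M →
      (∀ N : Subgroup G, IsMulCommutative N → M ≤ N → N = M) →
      ∀ g : G, (∃ x : G, x ≠ 1 ∧ x ∈ M ∧ g * x * g⁻¹ ∈ M) → g ∈ M)
    (E : Subgroup G) (hE : E ≠ ⊥) (hEc : IsMulCommutative E)
    (g : G) (hg : ∀ x ∈ E, ∀ y ∈ E, Commute x (g⁻¹ * y * g)) :
    g ∈ Subgroup.centralizer (E : Set G) := by
  obtain ⟨x, hxE, hx1⟩ : ∃ x ∈ E, x ≠ (1 : G) := by
    by_contra h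
    push_neg at h
    exact hE (Subgroup.eq_bot_iff_forall E |>.2 h)
  set M : Subgroup G := Subgroup.centralizer {x} with hM
  have memM : ∀ y : G, y ∈ M ↔ Commute x y := by
    intro y
    simp [hM, Subgroup.mem_centralizer_iff, Commute, SemiconjBy, eq_comm]
  have hxM : x ∈ M := (memM x).2 rfl
  have hMc : IsMulCommutative M := by
    constructor
    constructor
    rintro ⟨a, ha⟩ ⟨b, hb⟩
    have ha' := (memM a).1 ha
    have hb' := (memM b).1 hb
    ext
    show a * b = b * a
    by_cases ha1 : a = 1; · simp [ha1]
    by_cases hb1 : b = 1; · simp [hb1]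
    exact hCT a x b ha1 hx1 hb1 ha'.symm hb'
  have hMmax : ∀ N : Subgroup G, IsMulCommutative N → M ≤ N → N = M := by
    intro N hN hMN
    refine le_antisymm (fun y hy => ?_) hMN
    exact (memM y).2 (Subtype.ext_iff.1 (hN.1.1 ⟨x, hMN hxM⟩ ⟨y, hy⟩))
  have hgM : g ∈ M := by
    apply hMal M hMc hMmax
    refine ⟨x, hx1, hxM, ?_⟩
    rw [memM]
    have h := hg x hxE x hxE
    -- h : x * (g⁻¹ * x * g) = (g⁻¹ * x * g) * x
    have h' := h.eq
    show x * (g * x * g⁻¹) = (g * x * g⁻¹) * x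
    have := congrArg (fun t => g * t * g⁻¹) h'
    simpa [mul_assoc] using this.symm
  rw [Subgroup.mem_centralizer_iff]
  intro e heE
  show e * g = g * e
  by_cases he1 : e = 1; · simp [he1]
  by_cases hg1 : g = 1; · simp [hg1]
  have hgx : Commute g x := ((memM g).1 hgM).symm
  have hxe : Commute x e := by
    exact Subtype.ext_iff.1 (hEc.1.1 ⟨x, hxE⟩ ⟨e, heE⟩)
  exact (hCT g x e hg1 hx1 he1 hgx hxe).symm.eq
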